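/- Let n ≥ 2 and let H be a non-abelian free subgroup of the Higman–Thompson group T_n. Then for every point κ ∈ ℤ[1/n]/ℤ of the circle (equivalently, every point in the T_n-orbit of 0 + ℤ), the stabilizer {h ∈ H : h(κ) = κ} is a cyclic group (possibly trivial). -/

import Mathlib

noncomputable section

/-- The circle `S¹ = ℝ/ℤ`. -/
abbrev Circle1 := AddCircle (1 : ℝ)

/-- The group of self-homeomorphisms of a space, with `(f * g) x = f (g x)`. -/
instance {X : Type*} [TopologicalSpace X] : Group (X ≃ₜ X) where
  mul f g := g.trans f
  one := Homeomorph.refl _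
  inv := Homeomorph.symm
  mul_assoc _ _ _ := Homeomorph.ext fun _ => rfl
  one_mul _ := Homeomorph.ext fun _ => rfl
  mul_one _ := Homeomorph.ext fun _ => rfl
  inv_mul_cancel f := Homeomorph.ext f.symm_apply_apply

/-- `x` lies in `ℤ[1/n]`. -/
def IsNAdicRational (n : ℕ) (x : ℝ) : Prop := ∃ (a : ℤ) (k : ℕ), x = (a : ℝ) / (n : ℝ) ^ k

/-- `F : ℝ → ℝ` is piecewise linear on `[0,1]` with slopes integer powers of `n` and
breakpoints in `ℤ[1/n]`. -/
def IsPiecewiseLinearN (n : ℕ) (F : ℝ → ℝ) : Prop :=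
  ∃ (k : ℕ) (x : ℕ → ℝ), 0 < k ∧ x 0 = 0 ∧ x k = 1 ∧
    (∀ i < k, x i < x (i + 1)) ∧
    (∀ i ≤ k, IsNAdicRational n (x i)) ∧
    (∀ i < k, ∃ (m : ℤ) (c : ℝ), ∀ t ∈ Set.Icc (x i) (x (i + 1)),
      F t = (n : ℝ) ^ m * t + c)

/-- Membership in the Higman–Thompson group `T_n`, viewed as a group of
orientation-preserving self-homeomorphisms of `ℝ/ℤ`: `f` lifts to a strictly increasing
homeomorphism `F` of `ℝ` commuting with translation by `1`, which is piecewise linear with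
slopes powers of `n` and breakpoints in `ℤ[1/n]`. -/
def TnMem (n : ℕ) (f : Circle1 ≃ₜ Circle1) : Prop :=
  ∃ F : ℝ ≃ₜ ℝ, StrictMono F ∧ (∀ t : ℝ, F (t + 1) = F t + 1) ∧
    (∀ t : ℝ, f ((t : ℝ) : Circle1) = ((F t : ℝ) : Circle1)) ∧
    IsPiecewiseLinearN n F



/-- A commutative free group is cyclic. -/
lemma freeGroup_cyclic_of_comm {G : Type*} [Group G] [IsFreeGroup G]
    (hc : ∀ a b : G, a * b = b * a) : ∃ g : G, ∀ h : G, ∃ m : ℤ, h = g ^ m := by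
  classical
  set β := IsFreeGroup.Generators G
  have e : G ≃* FreeGroup β := IsFreeGroup.toFreeGroup G
  -- β is a subsingleton
  have hsub : ∀ s t : β, s = t := by
    intro s t
    by_contra hst
    have h1 : e.symm (FreeGroup.of s) * e.symm (FreeGroup.of t)
        = e.symm (FreeGroup.of t) * e.symm (FreeGroup.of s) := hc _ _
    have h2 : FreeGroup.of s * FreeGroup.of t = FreeGroup.of t * FreeGroup.of s := by
      have := congrArg e h1
      simpa [map_mul] using this
    set φ : FreeGroup β →* Equiv.Perm (Fin 3) :=
      FreeGroup.lift (fun b => if b = s then Equiv.swap 0 1 else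
        if b = t then Equiv.swap 1 2 else 1) with hφ
    have h3 := congrArg φ h2
    rw [map_mul, map_mul, hφ, FreeGroup.lift_apply_of, FreeGroup.lift_apply_of] at h3
    simp only [if_pos rfl, if_neg hst, if_neg (Ne.symm hst)] at h3
    have : ¬ ((Equiv.swap (0:Fin 3) 1) * Equiv.swap 1 2
        = Equiv.swap 1 2 * Equiv.swap (0:Fin 3) 1) := by decide
    exact this h3
  -- every element is a power of a single element
  by_cases hβ : Nonempty β
  · obtain ⟨b⟩ := hβ
    refine ⟨e.symm (FreeGroup.of b), fun h => ?_⟩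
    have key : ∀ z : FreeGroup β, ∃ m : ℤ, z = (FreeGroup.of b) ^ m := by
      intro z
      induction z using FreeGroup.induction_on with
      | C1 => exact ⟨0, by simp⟩
      | of x => exact ⟨1, by rw [hsub x b, zpow_one]⟩
      | inv_of x hx => obtain ⟨m, hm⟩ := hx; exact ⟨-m, by rw [hm, ← zpow_neg]⟩
      | mul x y hx hy =>
        obtain ⟨m, hm⟩ := hx; obtain ⟨m', hm'⟩ := hy
        exact ⟨m + m', by rw [hm, hm', ← zpow_add]⟩
    obtain ⟨m, hm⟩ := key (e h)
    refine ⟨m, ?_⟩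
    have := congrArg e.symm hm
    simpa [map_zpow] using this
  · refine ⟨1, fun h => ⟨0, ?_⟩⟩
    have key : ∀ z : FreeGroup β, z = 1 := by
      intro z
      induction z using FreeGroup.induction_on with
      | C1 => rfl
      | of x => exact absurd ⟨x⟩ hβ
      | inv_of x hx => rw [hx]; simp
      | mul x y hx hy => rw [hx, hy]; simp
    have := congrArg e.symm (key (e h))
    simpa using this

/-- Two commuting elements of a free group are powers of a common element,
which moreover lies in the subgroup they generate. -/
lemma freeGroup_commute_powers {G : Type*} [Group G] [IsFreeGroup G] {x y : G}
    (h : x * y = y * x) :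
    ∃ z ∈ Subgroup.closure ({x, y} : Set G), ∃ i j : ℤ, x = z ^ i ∧ y = z ^ j := by
  classical
  set K := Subgroup.closure ({x, y} : Set G) with hK
  have hxK : x ∈ K := Subgroup.subset_closure (by simp)
  have hyK : y ∈ K := Subgroup.subset_closure (by simp)
  -- K is commutative
  have hcomm1 : ∀ u ∈ K, Commute u x ∧ Commute u y := by
    intro u hu
    induction hu using Subgroup.closure_induction with
    | mem z hz =>
      rcases hz with rfl | rfl
      · exact ⟨Commute.refl z, h⟩
      · exact ⟨(Commute.symm h), Commute.refl z⟩
    | one => exact ⟨Commute.one_left x, Commute.one_left y⟩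
    | mul u v _ _ hu hv => exact ⟨hu.1.mul_left hv.1, hu.2.mul_left hv.2⟩
    | inv u _ hu => exact ⟨hu.1.inv_left, hu.2.inv_left⟩
  have hcomm : ∀ u ∈ K, ∀ v ∈ K, u * v = v * u := by
    intro u hu v hv
    induction hv using Subgroup.closure_induction with
    | mem z hz =>
      rcases hz with rfl | rfl
      · exact (hcomm1 u hu).1
      · exact (hcomm1 u hu).2
    | one => simp
    | mul v w _ _ hv hw => exact (Commute.mul_right hv hw : Commute u _)
    | inv v _ hv => exact (Commute.inv_right hv : Commute u _)
  haveI : IsFreeGroup K := subgroupIsFreeOfIsFree K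
  have hcK : ∀ a b : K, a * b = b * a := by
    intro a b
    ext
    exact hcomm a a.2 b b.2
  obtain ⟨g, hg⟩ := freeGroup_cyclic_of_comm hcK
  refine ⟨(g : G), g.2, ?_⟩
  obtain ⟨i, hi⟩ := hg ⟨x, hxK⟩
  obtain ⟨j, hj⟩ := hg ⟨y, hyK⟩
  refine ⟨i, j, ?_, ?_⟩
  · have := congrArg (Subgroup.subtype K) hi
    simpa using this
  · have := congrArg (Subgroup.subtype K) hj
    simpa using this

lemma per_int {G : ℝ → ℝ} (hG : ∀ t, G (t + 1) = G t + 1) :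
    ∀ (m : ℤ) (t : ℝ), G (t + m) = G t + m := by
  have hnat : ∀ (j : ℕ) (t : ℝ), G (t + j) = G t + j := by
    intro j
    induction j with
    | zero => simp
    | succ j ih =>
      intro t
      have : (t : ℝ) + (j + 1 : ℕ) = (t + j) + 1 := by push_cast; ring
      rw [this, hG, ih]
      push_cast; ring
  intro m t
  rcases le_or_gt 0 m with hm | hm
  · obtain ⟨j, rfl⟩ := Int.eq_ofNat_of_zero_le hm
    simpa using hnat j t
  · obtain ⟨j, rfl⟩ : ∃ j : ℕ, m = -(j : ℤ) := ⟨m.natAbs, by omega⟩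
    have := hnat j (t - j)
    have h2 : (t : ℝ) - j + j = t := by ring
    rw [h2] at this
    have : G (t - j) = G t - j := by linarith
    rw [show (t : ℝ) + (-(j:ℤ) : ℤ) = t - j by push_cast; ring, this]
    push_cast; ring

section pieces
variable {k : ℕ} {x : ℕ → ℝ} (hk : 0 < k) (hx0 : x 0 = 0) (hxk : x k = 1)
  (hinc : ∀ i < k, x i < x (i + 1))

include hinc in
lemma pieces_mono : ∀ i j, i ≤ j → j ≤ k → x i ≤ x j := by
  intro i j hij
  induction j with
  | zero => intro _; simp_all
  | succ j ih =>
    intro hjk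
    rcases Nat.eq_or_lt_of_le hij with h | hlt
    · rw [h]
    · exact le_trans (ih (by omega) (by omega)) (le_of_lt (hinc j (by omega)))

include hk hx0 hxk hinc in
lemma find_piece_right {q : ℝ} (h0 : 0 ≤ q) (h1 : q < 1) :
    ∃ i < k, x i ≤ q ∧ q < x (i + 1) := by
  classical
  set S := (Finset.range (k + 1)).filter (fun i => x i ≤ q) with hS
  have hne : S.Nonempty := ⟨0, by simp [hS, hx0, h0]⟩
  obtain ⟨i, hiS⟩ : ∃ i, i ∈ S ∧ ∀ j ∈ S, j ≤ i := ⟨S.max' hne, S.max'_mem hne, fun j hj => S.le_max' j hj⟩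
  obtain ⟨hiS, himax⟩ := hiS
  have hik : i ≤ k := by
    have := (Finset.mem_filter.1 hiS).1; simpa [Nat.lt_succ_iff] using this
  have hxi : x i ≤ q := (Finset.mem_filter.1 hiS).2
  have hink : i ≠ k := by
    rintro rfl; rw [hxk] at hxi; linarith
  refine ⟨i, by omega, hxi, ?_⟩
  by_contra hcon
  push_neg at hcon
  have : i + 1 ∈ S := Finset.mem_filter.2 ⟨by simp [hS, Nat.lt_succ_iff]; omega, hcon⟩
  have := himax _ this
  omega

include hk hx0 hxk hinc in
lemma find_piece_left {q : ℝ} (h0 : 0 < q) (h1 : q ≤ 1) :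
    ∃ i < k, x i < q ∧ q ≤ x (i + 1) := by
  classical
  set S := (Finset.range (k + 1)).filter (fun i => x i < q) with hS
  have hne : S.Nonempty := ⟨0, by simp [hS, hx0, h0]⟩
  obtain ⟨i, hiS⟩ : ∃ i, i ∈ S ∧ ∀ j ∈ S, j ≤ i := ⟨S.max' hne, S.max'_mem hne, fun j hj => S.le_max' j hj⟩
  obtain ⟨hiS, himax⟩ := hiS
  have hik : i ≤ k := by
    have := (Finset.mem_filter.1 hiS).1; simpa [Nat.lt_succ_iff] using this
  have hxi : x i < q := (Finset.mem_filter.1 hiS).2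
  have hink : i ≠ k := by
    rintro rfl; rw [hxk] at hxi; linarith
  refine ⟨i, by omega, hxi, ?_⟩
  by_contra hcon
  push_neg at hcon
  have : i + 1 ∈ S := Finset.mem_filter.2 ⟨by simp [hS, Nat.lt_succ_iff]; omega, hcon⟩
  have := himax _ this
  omega

end pieces

/-- Any `T_n`-map is affine on a small interval to the right of any point. -/
lemma pl_right_affine {n : ℕ} (hn : 2 ≤ n) {G : ℝ → ℝ}
    (hper : ∀ t, G (t + 1) = G t + 1) (hpl : IsPiecewiseLinearN n G) (a : ℝ) :
    ∃ δ > 0, ∃ s c : ℝ, 0 < s ∧ ∀ t ∈ Set.Icc a (a + δ), G t = s * t + c := by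
  obtain ⟨k, x, hk, hx0, hxk, hinc, _, hpieces⟩ := hpl
  set q := Int.fract a with hq
  obtain ⟨i, hik, hxi, hxi1⟩ := find_piece_right hk hx0 hxk hinc (Int.fract_nonneg a)
    (Int.fract_lt_one a)
  obtain ⟨m, c, hmc⟩ := hpieces i hik
  set M : ℤ := ⌊a⌋ with hM
  refine ⟨x (i + 1) - q, by linarith, (n : ℝ) ^ m, c + M - (n : ℝ) ^ m * M, ?_, ?_⟩
  · positivity
  · intro t ht
    obtain ⟨ht1, ht2⟩ := ht
    have hfl : a = q + M := by rw [hq, hM]; unfold Int.fract; ring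
    have htm : t - M ∈ Set.Icc (x i) (x (i + 1)) := by
      constructor
      · have : q ≤ t - M := by linarith
        linarith
      · linarith
    have := hmc (t - M) htm
    have hGt : G t = G (t - M) + M := by
      have := per_int hper M (t - M)
      simpa using this
    rw [hGt, this]
    ring

/-- Any `T_n`-map is affine on a small interval to the left of any point. -/
lemma pl_left_affine {n : ℕ} (hn : 2 ≤ n) {G : ℝ → ℝ}
    (hper : ∀ t, G (t + 1) = G t + 1) (hpl : IsPiecewiseLinearN n G) (a : ℝ) :
    ∃ δ > 0, ∃ s c : ℝ, 0 < s ∧ ∀ t ∈ Set.Icc (a - δ) a, G t = s * t + c := by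
  obtain ⟨k, x, hk, hx0, hxk, hinc, _, hpieces⟩ := hpl
  by_cases hq : Int.fract a = 0
  · -- `a` is an integer; use the piece ending at `1`, shifted by `⌊a⌋ - 1`
    obtain ⟨i, hik, hxi, hxi1⟩ := find_piece_left hk hx0 hxk hinc one_pos le_rfl
    obtain ⟨m, c, hmc⟩ := hpieces i hik
    have hxi1' : x (i + 1) = 1 := by
      have := pieces_mono hinc (i + 1) k (by omega) le_rfl
      rw [hxk] at this; linarith
    set M : ℤ := ⌊a⌋ - 1 with hM
    have hfl : a = 1 + M := by
      have h1 : (⌊a⌋ : ℝ) = a := by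
        have : Int.fract a = a - ⌊a⌋ := rfl
        rw [this] at hq; linarith
      push_cast [hM]; linarith
    refine ⟨1 - x i, by linarith, (n : ℝ) ^ m, c + M - (n : ℝ) ^ m * M, by positivity, ?_⟩
    intro t ht
    obtain ⟨ht1, ht2⟩ := ht
    have htm : t - M ∈ Set.Icc (x i) (x (i + 1)) := by
      rw [hxi1']
      constructor <;> [linarith; linarith]
    have := hmc (t - M) htm
    have hGt : G t = G (t - M) + M := by
      have := per_int hper M (t - M); simpa using this
    rw [hGt, this]; ring
  · set q := Int.fract a with hqdef
    have h0 : 0 < q := lt_of_le_of_ne (Int.fract_nonneg a) (Ne.symm hq)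
    obtain ⟨i, hik, hxi, hxi1⟩ := find_piece_left hk hx0 hxk hinc h0
      (le_of_lt (Int.fract_lt_one a))
    obtain ⟨m, c, hmc⟩ := hpieces i hik
    set M : ℤ := ⌊a⌋ with hM
    have hfl : a = q + M := by rw [hqdef, hM]; unfold Int.fract; ring
    refine ⟨q - x i, by linarith, (n : ℝ) ^ m, c + M - (n : ℝ) ^ m * M, by positivity, ?_⟩
    intro t ht
    obtain ⟨ht1, ht2⟩ := ht
    have htm : t - M ∈ Set.Icc (x i) (x (i + 1)) := by
      constructor <;> [linarith; linarith]
    have := hmc (t - M) htm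
    have hGt : G t = G (t - M) + M := by
      have := per_int hper M (t - M); simpa using this
    rw [hGt, this]; ring

/-- Right-affine germ with slope `s` at a fixed point `α`. -/
def RAff (G : ℝ → ℝ) (α s : ℝ) : Prop :=
  0 < s ∧ ∃ δ > 0, ∀ t ∈ Set.Icc α (α + δ), G t = α + s * (t - α)

def LAff (G : ℝ → ℝ) (α s : ℝ) : Prop :=
  0 < s ∧ ∃ δ > 0, ∀ t ∈ Set.Icc (α - δ) α, G t = α + s * (t - α)

lemma raff_of_pl {n : ℕ} (hn : 2 ≤ n) {G : ℝ → ℝ}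
    (hper : ∀ t, G (t + 1) = G t + 1) (hpl : IsPiecewiseLinearN n G) {α : ℝ}
    (hα : G α = α) : ∃ s, RAff G α s := by
  obtain ⟨δ, hδ, s, c, hs, hform⟩ := pl_right_affine hn hper hpl α
  have hc : c = α - s * α := by
    have := hform α ⟨le_refl α, by linarith⟩
    rw [hα] at this; linarith
  exact ⟨s, hs, δ, hδ, fun t ht => by rw [hform t ht, hc]; ring⟩

lemma laff_of_pl {n : ℕ} (hn : 2 ≤ n) {G : ℝ → ℝ}
    (hper : ∀ t, G (t + 1) = G t + 1) (hpl : IsPiecewiseLinearN n G) {α : ℝ}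
    (hα : G α = α) : ∃ s, LAff G α s := by
  obtain ⟨δ, hδ, s, c, hs, hform⟩ := pl_left_affine hn hper hpl α
  have hc : c = α - s * α := by
    have := hform α ⟨by linarith, le_refl α⟩
    rw [hα] at this; linarith
  exact ⟨s, hs, δ, hδ, fun t ht => by rw [hform t ht, hc]; ring⟩

lemma raff_unique {G : ℝ → ℝ} {α s s' : ℝ} (h : RAff G α s) (h' : RAff G α s') :
    s = s' := by
  obtain ⟨hs, δ, hδ, hf⟩ := h
  obtain ⟨hs', δ', hδ', hf'⟩ := h'
  set t := α + min δ δ' with ht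
  have hmin : 0 < min δ δ' := lt_min hδ hδ'
  have hl : min δ δ' ≤ δ := min_le_left _ _
  have hr : min δ δ' ≤ δ' := min_le_right _ _
  have h1 := hf t ⟨by rw [ht]; linarith, by rw [ht]; linarith⟩
  have h2 := hf' t ⟨by rw [ht]; linarith, by rw [ht]; linarith⟩
  have : s * (t - α) = s' * (t - α) := by linarith
  have ht' : t - α = min δ δ' := by rw [ht]; ring
  rw [ht'] at this
  exact mul_right_cancel₀ (ne_of_gt hmin) this

lemma laff_unique {G : ℝ → ℝ} {α s s' : ℝ} (h : LAff G α s) (h' : LAff G α s') :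
    s = s' := by
  obtain ⟨hs, δ, hδ, hf⟩ := h
  obtain ⟨hs', δ', hδ', hf'⟩ := h'
  set t := α - min δ δ' with ht
  have hmin : 0 < min δ δ' := lt_min hδ hδ'
  have hl : min δ δ' ≤ δ := min_le_left _ _
  have hr : min δ δ' ≤ δ' := min_le_right _ _
  have h1 := hf t ⟨by rw [ht]; linarith, by rw [ht]; linarith⟩
  have h2 := hf' t ⟨by rw [ht]; linarith, by rw [ht]; linarith⟩
  have : s * (t - α) = s' * (t - α) := by linarith
  have ht' : t - α = -(min δ δ') := by rw [ht]; ring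
  rw [ht'] at this
  have : s * min δ δ' = s' * min δ δ' := by linarith [this]
  exact mul_right_cancel₀ (ne_of_gt hmin) this

lemma raff_comp {G G' : ℝ → ℝ} {α s s' : ℝ} (h : RAff G α s) (h' : RAff G' α s') :
    RAff (fun t => G (G' t)) α (s * s') := by
  obtain ⟨hs, δ, hδ, hf⟩ := h
  obtain ⟨hs', δ', hδ', hf'⟩ := h'
  refine ⟨mul_pos hs hs', min δ' (δ / s'), by positivity, fun t ht => ?_⟩
  obtain ⟨ht1, ht2⟩ := ht
  have htδ' : t ≤ α + δ' := le_trans ht2 (by simp [min_le_left])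
  have hG't : G' t = α + s' * (t - α) := hf' t ⟨ht1, htδ'⟩
  have hmem : G' t ∈ Set.Icc α (α + δ) := by
    rw [hG't]
    have h1 : t - α ≤ δ / s' := by
      have h2 : min δ' (δ / s') ≤ δ / s' := min_le_right _ _
      linarith
    have h3 : s' * (t - α) ≤ δ := by
      have := (le_div_iff₀ hs').mp h1
      linarith
    constructor
    · nlinarith
    · linarith
  show G (G' t) = α + s * s' * (t - α)
  rw [hf _ hmem, hG't]
  ring

lemma laff_comp {G G' : ℝ → ℝ} {α s s' : ℝ} (h : LAff G α s) (h' : LAff G' α s') :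
    LAff (fun t => G (G' t)) α (s * s') := by
  obtain ⟨hs, δ, hδ, hf⟩ := h
  obtain ⟨hs', δ', hδ', hf'⟩ := h'
  refine ⟨mul_pos hs hs', min δ' (δ / s'), by positivity, fun t ht => ?_⟩
  obtain ⟨ht1, ht2⟩ := ht
  have htδ' : α - δ' ≤ t := by
    have := min_le_left δ' (δ / s'); linarith
  have hG't : G' t = α + s' * (t - α) := hf' t ⟨htδ', ht2⟩
  have hmem : G' t ∈ Set.Icc (α - δ) α := by
    rw [hG't]
    have h1 : -(δ / s') ≤ t - α := by
      have h2 : min δ' (δ / s') ≤ δ / s' := min_le_right _ _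
      linarith
    have h3 : -δ ≤ s' * (t - α) := by
      have hds : s' * (δ / s') = δ := by field_simp
      nlinarith
    constructor
    · linarith
    · nlinarith
  show G (G' t) = α + s * s' * (t - α)
  rw [hf _ hmem, hG't]
  ring

lemma raff_id (α : ℝ) : RAff id α 1 :=
  ⟨one_pos, 1, one_pos, fun t _ => by simp⟩

lemma laff_id (α : ℝ) : LAff id α 1 :=
  ⟨one_pos, 1, one_pos, fun t _ => by simp⟩

/-- For a `T_n`-map, the set of fixed points in a unit interval which are
right-accumulation points of the support is finite. -/
lemma accum_fixed_finite {n : ℕ} (hn : 2 ≤ n) {G : ℝ → ℝ}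
    (hper : ∀ t, G (t + 1) = G t + 1) (hpl : IsPiecewiseLinearN n G) (x₀ : ℝ) :
    {t : ℝ | t ∈ Set.Ioo x₀ (x₀ + 1) ∧ G t = t ∧
      ∀ ε > 0, ∃ s ∈ Set.Ioo t (t + ε), G s ≠ s}.Finite := by
  classical
  obtain ⟨k, x, hk, hx0, hxk, hinc, _, hpieces⟩ := hpl
  choose! em ec hmc using hpieces
  set pv : ℕ × ℤ → ℝ := fun p =>
    (ec p.1 + p.2 - (n : ℝ) ^ (em p.1) * p.2) / (1 - (n : ℝ) ^ (em p.1)) with hpv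
  have hfin : (pv '' ((Set.Iio k) ×ˢ ({⌊x₀⌋, ⌊x₀⌋ + 1} : Set ℤ))).Finite := by
    apply Set.Finite.image
    exact (Set.finite_Iio k).prod (by simp)
  apply hfin.subset
  rintro t ⟨⟨htl, htr⟩, hfix, hacc⟩
  set M : ℤ := ⌊t⌋ with hM
  have hfr : t = Int.fract t + M := by rw [hM]; unfold Int.fract; ring
  obtain ⟨i, hik, hxi, hxi1⟩ := find_piece_right hk hx0 hxk hinc (Int.fract_nonneg t)
    (Int.fract_lt_one t)
  set σ : ℝ := (n : ℝ) ^ (em i) with hσ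
  set c' : ℝ := ec i + M - σ * M with hc'
  have haff : ∀ u ∈ Set.Icc (x i + M) (x (i + 1) + M), G u = σ * u + c' := by
    intro u hu
    have humem : u - M ∈ Set.Icc (x i) (x (i + 1)) := ⟨by linarith [hu.1], by linarith [hu.2]⟩
    have h1 := hmc i hik (u - M) humem
    have h2 : G u = G (u - M) + M := by
      have := per_int hper M (u - M); simpa using this
    rw [h2, h1, hc', hσ]; ring
  have htpiece : x i + M ≤ t ∧ t < x (i + 1) + M := by
    constructor
    · linarith [hxi]
    · linarith [hxi1]
  have hσt : σ * t + c' = t := by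
    rw [← haff t ⟨htpiece.1, le_of_lt htpiece.2⟩, hfix]
  -- get a non-fixed point inside the piece
  obtain ⟨s, hs1, hs2⟩ := hacc (x (i + 1) + M - t) (by linarith [htpiece.2])
  have hsmem : s ∈ Set.Icc (x i + M) (x (i + 1) + M) :=
    ⟨by linarith [hs1.1, htpiece.1], by linarith [hs1.2]⟩
  have hσne : σ ≠ 1 := by
    intro hσ1
    apply hs2
    have hc0 : c' = 0 := by rw [hσ1] at hσt; linarith
    rw [haff s hsmem, hσ1, hc0]; ring
  refine ⟨(i, M), ⟨?_, ?_⟩, ?_⟩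
  · exact hik
  · simp only [Set.mem_insert_iff, Set.mem_singleton_iff]
    have h1 : (⌊x₀⌋ : ℤ) ≤ M := by
      rw [hM]; exact Int.floor_le_floor (le_of_lt htl)
    have h2 : M ≤ ⌊x₀⌋ + 1 := by
      rw [hM]
      have : (⌊x₀ + 1⌋ : ℤ) = ⌊x₀⌋ + 1 := by
        rw [show x₀ + 1 = x₀ + (1 : ℤ) by push_cast; ring, Int.floor_add_intCast]
      rw [← this]
      exact Int.floor_le_floor (le_of_lt htr)
    omega
  · show pv (i, M) = t
    rw [hpv]
    show (ec i + M - (n:ℝ) ^ (em i) * M) / (1 - (n:ℝ) ^ (em i)) = t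
    rw [← hσ]
    have h1 : 1 - σ ≠ 0 := by
      intro h; apply hσne; linarith
    field_simp
    rw [hc'] at hσt
    nlinarith [hσt]

lemma circleMul_apply (f g : Circle1 ≃ₜ Circle1) (x : Circle1) : (f * g) x = f (g x) := rfl

lemma circleOne_apply (x : Circle1) : (1 : Circle1 ≃ₜ Circle1) x = x := rfl

lemma circle_coe_eq_coe {a b : ℝ} : ((a : ℝ) : Circle1) = (b : Circle1) ↔ ∃ m : ℤ, a - b = m := by
  rw [show ((a : ℝ) : Circle1) = (b : Circle1) ↔ a - b ∈ AddSubgroup.zmultiples (1 : ℝ) from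
    QuotientAddGroup.eq_iff_sub_mem]
  constructor
  · rintro h
    obtain ⟨m, hm⟩ := AddSubgroup.mem_zmultiples_iff.1 h
    exact ⟨m, by simpa using hm.symm⟩
  · rintro ⟨m, hm⟩
    exact AddSubgroup.mem_zmultiples_iff.2 ⟨m, by simpa using hm.symm⟩

/-- Normalized lift of a circle homeomorphism fixing `x₀`. -/
def NLift (x₀ : ℝ) (f : Circle1 ≃ₜ Circle1) (G : ℝ → ℝ) : Prop :=
  Continuous G ∧ StrictMono G ∧ (∀ t, G (t + 1) = G t + 1) ∧
    (∀ t : ℝ, f ((t : ℝ) : Circle1) = ((G t : ℝ) : Circle1)) ∧ G x₀ = x₀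

lemma int_valued_eq_zero {D : ℝ → ℝ} (hc : Continuous D)
    (hint : ∀ t, ∃ m : ℤ, D t = m) {x₀ : ℝ} (h0 : D x₀ = 0) : ∀ t, D t = 0 := by
  intro t
  obtain ⟨m, hm⟩ := hint t
  rcases eq_or_ne m 0 with rfl | hm0
  · simpa using hm
  · exfalso
    have hcont : ContinuousOn D (Set.uIcc x₀ t) := hc.continuousOn
    have hsub := intermediate_value_uIcc hcont
    have hhalf : (if 0 ≤ (m : ℝ) then (1 : ℝ) / 2 else -(1 / 2)) ∈ Set.uIcc (D x₀) (D t) := by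
      rw [h0, hm]
      rcases le_or_gt (0 : ℝ) m with h | h
      · rw [if_pos h]
        have h1 : (1 : ℝ) ≤ m := by
          have : (0:ℤ) ≤ m := by exact_mod_cast h
          have : (1:ℤ) ≤ m := by omega
          exact_mod_cast this
        rw [Set.mem_uIcc]; left; constructor <;> linarith
      · rw [if_neg (not_le.2 h)]
        have h1 : (m : ℝ) ≤ -1 := by
          have : m < 0 := by exact_mod_cast h
          have : m ≤ -1 := by omega
          exact_mod_cast this
        rw [Set.mem_uIcc]; right; constructor <;> linarith
    obtain ⟨s, _, hs⟩ := hsub hhalf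
    obtain ⟨m', hm'⟩ := hint s
    rw [hm'] at hs
    rcases le_or_gt (0 : ℝ) m with h | h
    · rw [if_pos h] at hs
      have : (2 * m' : ℤ) = (1 : ℤ) := by
        have : 2 * (m' : ℝ) = 1 := by linarith
        exact_mod_cast this
      omega
    · rw [if_neg (not_le.2 h)] at hs
      have : (2 * m' : ℤ) = (-1 : ℤ) := by
        have : 2 * (m' : ℝ) = -1 := by linarith
        exact_mod_cast this
      omega

lemma nlift_unique {x₀ : ℝ} {f : Circle1 ≃ₜ Circle1} {G₁ G₂ : ℝ → ℝ}
    (h₁ : NLift x₀ f G₁) (h₂ : NLift x₀ f G₂) : G₁ = G₂ := by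
  obtain ⟨hc1, _, _, hind1, hfix1⟩ := h₁
  obtain ⟨hc2, _, _, hind2, hfix2⟩ := h₂
  funext t
  have key : ∀ u, G₁ u - G₂ u = 0 := by
    apply int_valued_eq_zero (D := fun u => G₁ u - G₂ u) (x₀ := x₀) (hc1.sub hc2)
    · intro u
      have : ((G₁ u : ℝ) : Circle1) = (G₂ u : Circle1) := by
        rw [← hind1 u, ← hind2 u]
      exact circle_coe_eq_coe.1 this
    · rw [hfix1, hfix2]; ring
  have := key t; linarith

lemma pl_id (n : ℕ) : IsPiecewiseLinearN n id := by
  refine ⟨1, fun i => if i = 0 then 0 else 1, one_pos, by simp, by simp, ?_, ?_, ?_⟩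
  · intro i hi
    interval_cases i
    norm_num
  · intro i hi
    interval_cases i
    · exact ⟨0, 0, by norm_num⟩
    · exact ⟨1, 0, by norm_num⟩
  · intro i hi
    interval_cases i
    refine ⟨0, 0, fun t _ => by norm_num⟩

lemma nlift_exists {n : ℕ} {x₀ : ℝ} {f : Circle1 ≃ₜ Circle1} (hTn : TnMem n f)
    (hfix : f ((x₀ : ℝ) : Circle1) = ((x₀ : ℝ) : Circle1)) :
    ∃ G, NLift x₀ f G ∧ IsPiecewiseLinearN n G := by
  obtain ⟨F, hmono, hper, hind, hpl⟩ := hTn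
  have : ((F x₀ : ℝ) : Circle1) = ((x₀ : ℝ) : Circle1) := by rw [← hind x₀, hfix]
  obtain ⟨m, hm⟩ := circle_coe_eq_coe.1 this
  refine ⟨fun t => F t - m, ⟨?_, ?_, ?_, ?_, ?_⟩, ?_⟩
  · exact F.continuous.sub continuous_const
  · intro u v huv; simpa using hmono huv
  · intro t; show F (t+1) - m = (F t - m) + 1; rw [hper]; ring
  · intro t
    rw [hind t]
    symm
    exact circle_coe_eq_coe.2 ⟨-m, by push_cast; ring⟩
  · show F x₀ - m = x₀; linarith
  · obtain ⟨k, x, hk, hx0, hxk, hinc, hadic, hpieces⟩ := hpl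
    refine ⟨k, x, hk, hx0, hxk, hinc, hadic, ?_⟩
    intro i hi
    obtain ⟨mm, c, hmc⟩ := hpieces i hi
    exact ⟨mm, c - m, fun t ht => by show F t - m = _; rw [hmc t ht]; ring⟩

open Classical in
/-- The canonical normalized lift. -/
def nlift (n : ℕ) (x₀ : ℝ) (f : Circle1 ≃ₜ Circle1) : ℝ → ℝ :=
  if h : ∃ G, NLift x₀ f G ∧ IsPiecewiseLinearN n G then h.choose else id

lemma nlift_spec {n : ℕ} {x₀ : ℝ} {f : Circle1 ≃ₜ Circle1}
    (h : ∃ G, NLift x₀ f G ∧ IsPiecewiseLinearN n G) :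
    NLift x₀ f (nlift n x₀ f) ∧ IsPiecewiseLinearN n (nlift n x₀ f) := by
  classical
  rw [nlift]
  rw [dif_pos h]
  exact h.choose_spec

lemma nlift_one (n : ℕ) (x₀ : ℝ) : nlift n x₀ 1 = id := by
  have hex : ∃ G, NLift x₀ (1 : Circle1 ≃ₜ Circle1) G ∧ IsPiecewiseLinearN n G :=
    ⟨id, ⟨continuous_id, strictMono_id, by intro t; simp, fun t => rfl, rfl⟩, pl_id n⟩
  exact nlift_unique (nlift_spec hex).1
    ⟨continuous_id, strictMono_id, by intro t; simp, fun t => rfl, rfl⟩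

lemma nlift_mul {n : ℕ} {x₀ : ℝ} {f g : Circle1 ≃ₜ Circle1}
    (hf : ∃ G, NLift x₀ f G ∧ IsPiecewiseLinearN n G)
    (hg : ∃ G, NLift x₀ g G ∧ IsPiecewiseLinearN n G)
    (hfg : ∃ G, NLift x₀ (f * g) G ∧ IsPiecewiseLinearN n G) :
    nlift n x₀ (f * g) = nlift n x₀ f ∘ nlift n x₀ g := by
  obtain ⟨⟨hc1, hm1, hp1, hi1, hx1⟩, _⟩ := nlift_spec hf
  obtain ⟨⟨hc2, hm2, hp2, hi2, hx2⟩, _⟩ := nlift_spec hg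
  apply nlift_unique (nlift_spec hfg).1
  refine ⟨hc1.comp hc2, hm1.comp hm2, ?_, ?_, ?_⟩
  · intro t; show nlift n x₀ f (nlift n x₀ g (t+1)) = _; rw [hp2, hp1]; rfl
  · intro t
    rw [circleMul_apply, hi2 t, hi1 (nlift n x₀ g t)]
    rfl
  · show nlift n x₀ f (nlift n x₀ g x₀) = x₀
    rw [hx2, hx1]

lemma fix_zpow {f : Circle1 ≃ₜ Circle1} {x : Circle1} (h : f x = x) (m : ℤ) :
    (f ^ m) x = x := by
  have hnat : ∀ k : ℕ, (f ^ k) x = x := by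
    intro k
    induction k with
    | zero => rfl
    | succ k ih => rw [pow_succ, circleMul_apply, h, ih]
  have hinv : ∀ (g : Circle1 ≃ₜ Circle1), g x = x → g⁻¹ x = x := by
    intro g hg
    have : g⁻¹ (g x) = x := g.symm_apply_apply x
    rwa [hg] at this
  rcases le_or_gt 0 m with hm | hm
  · obtain ⟨k, rfl⟩ := Int.eq_ofNat_of_zero_le hm
    rw [zpow_natCast]; exact hnat k
  · obtain ⟨k, rfl⟩ : ∃ k : ℕ, m = -(k : ℤ) := ⟨m.natAbs, by omega⟩
    rw [zpow_neg, zpow_natCast]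
    exact hinv _ (hnat k)

lemma gap_left {C : Set ℝ} (hC : IsClosed C) {p lo : ℝ} (hlo : lo ∈ C) (hlop : lo ≤ p)
    (hp : p ∉ C) :
    sSup (C ∩ Set.Iic p) ∈ C ∧ lo ≤ sSup (C ∩ Set.Iic p) ∧ sSup (C ∩ Set.Iic p) < p ∧
      ∀ q ∈ C, q ≤ p → q ≤ sSup (C ∩ Set.Iic p) := by
  have hne : (C ∩ Set.Iic p).Nonempty := ⟨lo, hlo, hlop⟩
  have hbdd : BddAbove (C ∩ Set.Iic p) := ⟨p, fun y hy => hy.2⟩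
  have hmem : sSup (C ∩ Set.Iic p) ∈ C ∩ Set.Iic p :=
    (hC.inter isClosed_Iic).csSup_mem hne hbdd
  refine ⟨hmem.1, le_csSup hbdd ⟨hlo, hlop⟩, lt_of_le_of_ne hmem.2 ?_, fun q hq hqp =>
    le_csSup hbdd ⟨hq, hqp⟩⟩
  intro h; exact hp (h ▸ hmem.1)

lemma gap_right {C : Set ℝ} (hC : IsClosed C) {p hi : ℝ} (hhi : hi ∈ C) (hphi : p ≤ hi)
    (hp : p ∉ C) :
    sInf (C ∩ Set.Ici p) ∈ C ∧ sInf (C ∩ Set.Ici p) ≤ hi ∧ p < sInf (C ∩ Set.Ici p) ∧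
      ∀ q ∈ C, p ≤ q → sInf (C ∩ Set.Ici p) ≤ q := by
  have hne : (C ∩ Set.Ici p).Nonempty := ⟨hi, hhi, hphi⟩
  have hbdd : BddBelow (C ∩ Set.Ici p) := ⟨p, fun y hy => hy.2⟩
  have hmem : sInf (C ∩ Set.Ici p) ∈ C ∩ Set.Ici p :=
    (hC.inter isClosed_Ici).csInf_mem hne hbdd
  refine ⟨hmem.1, csInf_le hbdd ⟨hhi, hphi⟩, lt_of_le_of_ne hmem.2 ?_, fun q hq hqp =>
    csInf_le hbdd ⟨hq, hqp⟩⟩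
  intro h; exact hp (h ▸ hmem.1)


set_option maxHeartbeats 1600000 in
lemma stab_comm (n : ℕ) (hn : 2 ≤ n) (H : Subgroup (Circle1 ≃ₜ Circle1))
    (hHT : ∀ f ∈ H, TnMem n f) (hfree : IsFreeGroup H) (x₀ : ℝ)
    (a b : H) (ha : (a : Circle1 ≃ₜ Circle1) ((x₀ : ℝ) : Circle1) = ((x₀ : ℝ) : Circle1))
    (hb : (b : Circle1 ≃ₜ Circle1) ((x₀ : ℝ) : Circle1) = ((x₀ : ℝ) : Circle1)) :
    a * b = b * a := by
  classical
  haveI := hfree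
  by_contra hab
  set Γ : Subgroup H := Subgroup.closure ({a, b} : Set H) with hΓdef
  have haΓ : a ∈ Γ := Subgroup.subset_closure (by simp)
  have hbΓ : b ∈ Γ := Subgroup.subset_closure (by simp)
  -- Elements of Γ fix x₀ on the circle
  have hΓfix : ∀ h : H, h ∈ Γ →
      (h : Circle1 ≃ₜ Circle1) ((x₀ : ℝ) : Circle1) = ((x₀ : ℝ) : Circle1) := by
    intro h hh
    induction hh using Subgroup.closure_induction with
    | mem z hz => rcases hz with rfl | rfl; exacts [ha, hb]
    | one => rfl
    | mul g₁ g₂ _ _ hg₁ hg₂ =>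
      have : ((g₁ * g₂ : H) : Circle1 ≃ₜ Circle1) = (g₁ : Circle1 ≃ₜ Circle1) * g₂ := rfl
      rw [this, circleMul_apply, hg₂, hg₁]
    | inv g₁ _ hg₁ =>
      have h2 : ((g₁⁻¹ : H) : Circle1 ≃ₜ Circle1) = ((g₁ : Circle1 ≃ₜ Circle1)).symm := rfl
      rw [h2]
      conv_lhs => rw [← hg₁]
      exact Homeomorph.symm_apply_apply _ _
  have hQ : ∀ h : H, h ∈ Γ →
      ∃ G, NLift x₀ (h : Circle1 ≃ₜ Circle1) G ∧ IsPiecewiseLinearN n G :=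
    fun h hh => nlift_exists (hHT _ h.2) (hΓfix h hh)
  set Φ : H → ℝ → ℝ := fun h => nlift n x₀ (h : Circle1 ≃ₜ Circle1) with hΦdef
  have hN : ∀ h : H, h ∈ Γ →
      NLift x₀ (h : Circle1 ≃ₜ Circle1) (Φ h) ∧ IsPiecewiseLinearN n (Φ h) :=
    fun h hh => nlift_spec (hQ h hh)
  have hco : ∀ h : H, h ∈ Γ → Continuous (Φ h) := fun h hh => (hN h hh).1.1
  have hmo : ∀ h : H, h ∈ Γ → StrictMono (Φ h) := fun h hh => (hN h hh).1.2.1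
  have hpe : ∀ h : H, h ∈ Γ → ∀ t, Φ h (t + 1) = Φ h t + 1 := fun h hh => (hN h hh).1.2.2.1
  have hcirc : ∀ h : H, h ∈ Γ → ∀ t : ℝ,
      (h : Circle1 ≃ₜ Circle1) ((t : ℝ) : Circle1) = ((Φ h t : ℝ) : Circle1) :=
    fun h hh => (hN h hh).1.2.2.2.1
  have hx0 : ∀ h : H, h ∈ Γ → Φ h x₀ = x₀ := fun h hh => (hN h hh).1.2.2.2.2
  have hpl : ∀ h : H, h ∈ Γ → IsPiecewiseLinearN n (Φ h) := fun h hh => (hN h hh).2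
  have hΦm : ∀ g : H, g ∈ Γ → ∀ h : H, h ∈ Γ → Φ (g * h) = Φ g ∘ Φ h := by
    intro g hg h hh
    exact nlift_mul (hQ g hg) (hQ h hh) (hQ (g * h) (mul_mem hg hh))
  have hΦm' : ∀ g : H, g ∈ Γ → ∀ h : H, h ∈ Γ → ∀ t, Φ (g * h) t = Φ g (Φ h t) :=
    fun g hg h hh t => congrFun (hΦm g hg h hh) t
  have hΦ1 : Φ (1 : H) = id := by
    show nlift n x₀ ((1 : H) : Circle1 ≃ₜ Circle1) = id
    rw [OneMemClass.coe_one]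
    exact nlift_one n x₀
  have hΦinv : ∀ h : H, h ∈ Γ → (∀ t, Φ h⁻¹ (Φ h t) = t) ∧ (∀ t, Φ h (Φ h⁻¹ t) = t) := by
    intro h hh
    constructor
    · have h1 : Φ h⁻¹ ∘ Φ h = id := by
        rw [← hΦm _ (inv_mem hh) _ hh, inv_mul_cancel, hΦ1]
      exact fun t => congrFun h1 t
    · have h1 : Φ h ∘ Φ h⁻¹ = id := by
        rw [← hΦm _ hh _ (inv_mem hh), mul_inv_cancel, hΦ1]
      exact fun t => congrFun h1 t
  have hinvfix : ∀ h : H, h ∈ Γ → ∀ t, Φ h t = t → Φ h⁻¹ t = t := by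
    intro h hh t ht
    have := (hΦinv h hh).1 t
    rwa [ht] at this
  have hΦinj : ∀ h : H, h ∈ Γ → Φ h = id → h = 1 := by
    intro h hh hΦid
    have hfixall : ∀ z : Circle1, (h : Circle1 ≃ₜ Circle1) z = z := by
      intro z
      induction z using QuotientAddGroup.induction_on with
      | H t => rw [hcirc h hh t, hΦid]; rfl
    apply Subtype.ext
    apply Homeomorph.ext
    intro z
    exact hfixall z
  have heasy : ∀ g : H, g ∈ Γ → ∀ t : ℝ, Φ g t = t → ∀ j : ℤ, Φ (g ^ j) t = t := by
    intro g hg t hfix j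
    have hnat : ∀ k : ℕ, Φ (g ^ k) t = t := by
      intro k
      induction k with
      | zero => rw [pow_zero, hΦ1]; rfl
      | succ k ih =>
        rw [pow_succ', hΦm' g hg (g ^ k) (pow_mem hg k), ih, hfix]
    rcases le_or_gt 0 j with hj | hj
    · obtain ⟨k, rfl⟩ := Int.eq_ofNat_of_zero_le hj
      rw [zpow_natCast]; exact hnat k
    · obtain ⟨k, rfl⟩ : ∃ k : ℕ, j = -(k : ℤ) := ⟨j.natAbs, by omega⟩
      rw [zpow_neg, zpow_natCast]
      exact hinvfix (g ^ k) (pow_mem hg k) t (hnat k)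
  -- The common fixed-point set of the generators
  set A : ℝ → ℝ := Φ a with hA
  set B : ℝ → ℝ := Φ b with hB
  set Fx : Set ℝ := {t | A t = t ∧ B t = t} with hFxdef
  have hFxcl : IsClosed Fx := by
    have h1 : Fx = {t | A t = t} ∩ {t | B t = t} := rfl
    rw [h1]
    exact (isClosed_eq (hco a haΓ) continuous_id).inter
      (isClosed_eq (hco b hbΓ) continuous_id)
  have hx₀Fx : x₀ ∈ Fx := ⟨hx0 a haΓ, hx0 b hbΓ⟩
  have hFx1 : x₀ + 1 ∈ Fx := by
    constructor
    · have := hpe a haΓ x₀; rw [hx0 a haΓ] at this; exact this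
    · have := hpe b hbΓ x₀; rw [hx0 b hbΓ] at this; exact this
  have hFxΓ : ∀ h : H, h ∈ Γ → ∀ t ∈ Fx, Φ h t = t := by
    intro h hh
    induction hh using Subgroup.closure_induction with
    | mem z hz =>
      rcases hz with rfl | rfl
      · exact fun t ht => ht.1
      · exact fun t ht => ht.2
    | one => intro t _; rw [hΦ1]; rfl
    | mul g₁ g₂ hg₁ hg₂ hi₁ hi₂ =>
      intro t ht
      rw [hΦm' g₁ hg₁ g₂ hg₂, hi₂ t ht, hi₁ t ht]
    | inv g₁ hg₁ hi₁ =>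
      intro t ht
      exact hinvfix g₁ hg₁ t (hi₁ t ht)
  -- Components of the complement of Fx
  set lep : ℝ → ℝ := fun p => sSup (Fx ∩ Set.Iic p) with hlepdef
  set rep : ℝ → ℝ := fun p => sInf (Fx ∩ Set.Ici p) with hrepdef
  have hgap : ∀ p, p ∈ Set.Ioo x₀ (x₀ + 1) → p ∉ Fx →
      lep p ∈ Fx ∧ x₀ ≤ lep p ∧ lep p < p ∧ (∀ q ∈ Fx, q ≤ p → q ≤ lep p) ∧
      rep p ∈ Fx ∧ rep p ≤ x₀ + 1 ∧ p < rep p ∧ (∀ q ∈ Fx, p ≤ q → rep p ≤ q) := by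
    intro p hp hpF
    obtain ⟨h1, h2, h3, h4⟩ := gap_left hFxcl hx₀Fx (le_of_lt hp.1) hpF
    obtain ⟨h5, h6, h7, h8⟩ := gap_right hFxcl hFx1 (le_of_lt hp.2) hpF
    exact ⟨h1, h2, h3, h4, h5, h6, h7, h8⟩
  have hnob : ∀ p, p ∈ Set.Ioo x₀ (x₀ + 1) → p ∉ Fx →
      ∀ q ∈ Fx, ¬(lep p < q ∧ q < rep p) := by
    intro p hp hpF q hq ⟨hq1, hq2⟩
    obtain ⟨_, _, _, h4, _, _, _, h8⟩ := hgap p hp hpF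
    rcases le_total q p with h | h
    · exact absurd (h4 q hq h) (not_le.2 hq1)
    · exact absurd (h8 q hq h) (not_le.2 hq2)
  have hmaps : ∀ h : H, h ∈ Γ → ∀ p, p ∈ Set.Ioo x₀ (x₀ + 1) → p ∉ Fx →
      lep p < Φ h p ∧ Φ h p < rep p ∧ Φ h p ∉ Fx := by
    intro h hh p hp hpF
    obtain ⟨h1, _, h3, _, h5, _, h7, _⟩ := hgap p hp hpF
    refine ⟨?_, ?_, ?_⟩
    · have := hmo h hh h3
      rwa [hFxΓ h hh _ h1] at this
    · have := hmo h hh h7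
      rwa [hFxΓ h hh _ h5] at this
    · intro hmem
      have h9 : Φ h⁻¹ (Φ h p) = Φ h p := hFxΓ h⁻¹ (inv_mem hh) _ hmem
      rw [(hΦinv h hh).1 p] at h9
      exact hpF (h9 ▸ hmem)
  have hlinv : ∀ h : H, h ∈ Γ → ∀ p, p ∈ Set.Ioo x₀ (x₀ + 1) → p ∉ Fx →
      lep (Φ h p) = lep p ∧ rep (Φ h p) = rep p := by
    intro h hh p hp hpF
    obtain ⟨h1, h2, h3, h4, h5, h6, h7, h8⟩ := hgap p hp hpF
    obtain ⟨hm1, hm2, _⟩ := hmaps h hh p hp hpF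
    constructor
    · apply le_antisymm
      · refine csSup_le ⟨lep p, ⟨h1, le_of_lt hm1⟩⟩ ?_
        rintro q ⟨hqF, hqle⟩
        by_contra hqgt
        push_neg at hqgt
        exact hnob p hp hpF q hqF ⟨hqgt, lt_of_le_of_lt hqle hm2⟩
      · exact le_csSup ⟨Φ h p, fun y hy => hy.2⟩ ⟨h1, le_of_lt hm1⟩
    · apply le_antisymm
      · exact csInf_le ⟨Φ h p, fun y hy => hy.2⟩ ⟨h5, le_of_lt hm2⟩
      · refine le_csInf ⟨rep p, ⟨h5, le_of_lt hm2⟩⟩ ?_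
        rintro q ⟨hqF, hqle⟩
        by_contra hqgt
        push_neg at hqgt
        exact hnob p hp hpF q hqF ⟨lt_of_lt_of_le hm1 hqle, hqgt⟩
  -- Commutators are trivial near points of Fx
  have hgermR : ∀ p q : H, p ∈ Γ → q ∈ Γ → ∀ α ∈ Fx,
      ∃ δ > 0, ∀ t ∈ Set.Icc α (α + δ), Φ (p * q * p⁻¹ * q⁻¹) t = t := by
    intro p q hp hq α hα
    obtain ⟨sp, hsp⟩ := raff_of_pl hn (hpe p hp) (hpl p hp) (hFxΓ p hp α hα)
    obtain ⟨sq, hsq⟩ := raff_of_pl hn (hpe q hq) (hpl q hq) (hFxΓ q hq α hα)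
    obtain ⟨sp', hsp'⟩ := raff_of_pl hn (hpe p⁻¹ (inv_mem hp)) (hpl p⁻¹ (inv_mem hp))
      (hFxΓ p⁻¹ (inv_mem hp) α hα)
    obtain ⟨sq', hsq'⟩ := raff_of_pl hn (hpe q⁻¹ (inv_mem hq)) (hpl q⁻¹ (inv_mem hq))
      (hFxΓ q⁻¹ (inv_mem hq) α hα)
    have hps : sp' * sp = 1 := by
      have h1 : RAff (fun t => Φ p⁻¹ (Φ p t)) α (sp' * sp) := raff_comp hsp' hsp
      have h2 : (fun t => Φ p⁻¹ (Φ p t)) = id := funext fun t => (hΦinv p hp).1 t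
      rw [h2] at h1
      exact raff_unique h1 (raff_id α)
    have hqs : sq' * sq = 1 := by
      have h1 : RAff (fun t => Φ q⁻¹ (Φ q t)) α (sq' * sq) := raff_comp hsq' hsq
      have h2 : (fun t => Φ q⁻¹ (Φ q t)) = id := funext fun t => (hΦinv q hq).1 t
      rw [h2] at h1
      exact raff_unique h1 (raff_id α)
    have hwf : Φ (p * q * p⁻¹ * q⁻¹) = fun t => Φ p (Φ q (Φ p⁻¹ (Φ q⁻¹ t))) := by
      rw [hΦm _ (mul_mem (mul_mem hp hq) (inv_mem hp)) _ (inv_mem hq),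
          hΦm _ (mul_mem hp hq) _ (inv_mem hp), hΦm _ hp _ hq]
      rfl
    have hcomp : RAff (Φ (p * q * p⁻¹ * q⁻¹)) α (sp * (sq * (sp' * sq'))) := by
      rw [hwf]
      exact raff_comp hsp (raff_comp hsq (raff_comp hsp' hsq'))
    have hslope : sp * (sq * (sp' * sq')) = 1 := by
      have h3 : sp * (sq * (sp' * sq')) = (sp' * sp) * (sq' * sq) := by ring
      rw [h3, hps, hqs, one_mul]
    rw [hslope] at hcomp
    obtain ⟨_, δ, hδ, hform⟩ := hcomp
    exact ⟨δ, hδ, fun t ht => by rw [hform t ht]; ring⟩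
  have hgermL : ∀ p q : H, p ∈ Γ → q ∈ Γ → ∀ α ∈ Fx,
      ∃ δ > 0, ∀ t ∈ Set.Icc (α - δ) α, Φ (p * q * p⁻¹ * q⁻¹) t = t := by
    intro p q hp hq α hα
    obtain ⟨sp, hsp⟩ := laff_of_pl hn (hpe p hp) (hpl p hp) (hFxΓ p hp α hα)
    obtain ⟨sq, hsq⟩ := laff_of_pl hn (hpe q hq) (hpl q hq) (hFxΓ q hq α hα)
    obtain ⟨sp', hsp'⟩ := laff_of_pl hn (hpe p⁻¹ (inv_mem hp)) (hpl p⁻¹ (inv_mem hp))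
      (hFxΓ p⁻¹ (inv_mem hp) α hα)
    obtain ⟨sq', hsq'⟩ := laff_of_pl hn (hpe q⁻¹ (inv_mem hq)) (hpl q⁻¹ (inv_mem hq))
      (hFxΓ q⁻¹ (inv_mem hq) α hα)
    have hps : sp' * sp = 1 := by
      have h1 : LAff (fun t => Φ p⁻¹ (Φ p t)) α (sp' * sp) := laff_comp hsp' hsp
      have h2 : (fun t => Φ p⁻¹ (Φ p t)) = id := funext fun t => (hΦinv p hp).1 t
      rw [h2] at h1
      exact laff_unique h1 (laff_id α)
    have hqs : sq' * sq = 1 := by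
      have h1 : LAff (fun t => Φ q⁻¹ (Φ q t)) α (sq' * sq) := laff_comp hsq' hsq
      have h2 : (fun t => Φ q⁻¹ (Φ q t)) = id := funext fun t => (hΦinv q hq).1 t
      rw [h2] at h1
      exact laff_unique h1 (laff_id α)
    have hwf : Φ (p * q * p⁻¹ * q⁻¹) = fun t => Φ p (Φ q (Φ p⁻¹ (Φ q⁻¹ t))) := by
      rw [hΦm _ (mul_mem (mul_mem hp hq) (inv_mem hp)) _ (inv_mem hq),
          hΦm _ (mul_mem hp hq) _ (inv_mem hp), hΦm _ hp _ hq]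
      rfl
    have hcomp : LAff (Φ (p * q * p⁻¹ * q⁻¹)) α (sp * (sq * (sp' * sq'))) := by
      rw [hwf]
      exact laff_comp hsp (laff_comp hsq (laff_comp hsp' hsq'))
    have hslope : sp * (sq * (sp' * sq')) = 1 := by
      have h3 : sp * (sq * (sp' * sq')) = (sp' * sp) * (sq' * sq) := by ring
      rw [h3, hps, hqs, one_mul]
    rw [hslope] at hcomp
    obtain ⟨_, δ, hδ, hform⟩ := hcomp
    exact ⟨δ, hδ, fun t ht => by rw [hform t ht]; ring⟩
  -- The orbit lemma
  have horbit : ∀ α β : ℝ, α ∈ Fx → β ∈ Fx → (∀ q ∈ Fx, ¬(α < q ∧ q < β)) →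
      ∀ m s : ℝ, α < m → m ≤ s → s < β → ∃ u, u ∈ Γ ∧ s < Φ u m := by
    intro α β hαF hβF hno m s hαm hms hsβ
    by_contra hcon
    push_neg at hcon
    set O : Set ℝ := {r | ∃ u, u ∈ Γ ∧ Φ u m = r} with hOdef
    have hmO : m ∈ O := ⟨1, one_mem Γ, by rw [hΦ1]; rfl⟩
    have hObdd : BddAbove O := ⟨s, by rintro r ⟨u, hu, rfl⟩; exact hcon u hu⟩
    set σ := sSup O with hσdef
    have hmσ : m ≤ σ := le_csSup hObdd hmO
    have hσs : σ ≤ s := csSup_le ⟨m, hmO⟩ (by rintro r ⟨u, hu, rfl⟩; exact hcon u hu)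
    have hfix1 : ∀ g : H, g ∈ Γ → Φ g σ ≤ σ := by
      intro g hg
      by_contra hgt
      push_neg at hgt
      have hopen : IsOpen {t : ℝ | σ < Φ g t} := isOpen_lt continuous_const (hco g hg)
      have hmem2 : {t : ℝ | σ < Φ g t} ∈ nhds σ := hopen.mem_nhds hgt
      obtain ⟨l, r, hlr, hsub⟩ := mem_nhds_iff_exists_Ioo_subset.1 hmem2
      obtain ⟨o, hoO, hlo⟩ := exists_lt_of_lt_csSup ⟨m, hmO⟩ hlr.1
      have hoIoo : o ∈ Set.Ioo l r := ⟨hlo, lt_of_le_of_lt (le_csSup hObdd hoO) hlr.2⟩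
      have h2 : σ < Φ g o := hsub hoIoo
      obtain ⟨u, hu, rfl⟩ := hoO
      have h3 : Φ g (Φ u m) ∈ O := ⟨g * u, mul_mem hg hu, (hΦm' g hg u hu m).symm ▸ rfl⟩
      have := le_csSup hObdd h3
      linarith
    have hfixσ : ∀ g : H, g ∈ Γ → Φ g σ = σ := by
      intro g hg
      have h1 := hfix1 g hg
      have h2 := hfix1 g⁻¹ (inv_mem hg)
      have h3 := (hmo g hg).monotone h2
      rw [(hΦinv g hg).2 σ] at h3
      linarith
    exact hno σ ⟨hfixσ a haΓ, hfixσ b hbΓ⟩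
      ⟨lt_of_lt_of_le hαm hmσ, lt_of_le_of_lt hσs hsβ⟩
  -- The finite set of possible component left endpoints
  set ZA : Set ℝ := {t | t ∈ Set.Ioo x₀ (x₀ + 1) ∧ A t = t ∧
    ∀ ε > 0, ∃ s ∈ Set.Ioo t (t + ε), A s ≠ s} with hZAdef
  set ZB : Set ℝ := {t | t ∈ Set.Ioo x₀ (x₀ + 1) ∧ B t = t ∧
    ∀ ε > 0, ∃ s ∈ Set.Ioo t (t + ε), B s ≠ s} with hZBdef
  have hE : (ZA ∪ ZB ∪ {x₀}).Finite :=
    ((accum_fixed_finite hn (hpe a haΓ) (hpl a haΓ) x₀).union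
      (accum_fixed_finite hn (hpe b hbΓ) (hpl b hbΓ) x₀)).union (Set.finite_singleton x₀)
  set SS : H → Set ℝ := fun w => lep '' {p | p ∈ Set.Ioo x₀ (x₀ + 1) ∧ Φ w p ≠ p} with hSSdef
  have hSsub : ∀ w : H, w ∈ Γ → SS w ⊆ ZA ∪ ZB ∪ {x₀} := by
    intro w hw
    rintro γ ⟨p, ⟨hpI, hpw⟩, rfl⟩
    have hpF : p ∉ Fx := fun hF => hpw (hFxΓ w hw p hF)
    obtain ⟨h1, h2, h3, h4, h5, h6, h7, h8⟩ := hgap p hpI hpF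
    rcases eq_or_lt_of_le h2 with heq | hlt
    · right; rw [← heq]; rfl
    · left
      by_contra hno2
      obtain ⟨hnoA, hnoB⟩ : ¬(lep p ∈ ZA) ∧ ¬(lep p ∈ ZB) :=
        ⟨fun hmem => hno2 (Or.inl hmem), fun hmem => hno2 (Or.inr hmem)⟩
      have hIoo : lep p ∈ Set.Ioo x₀ (x₀ + 1) := ⟨hlt, lt_trans h3 hpI.2⟩
      have hAfix : A (lep p) = lep p := h1.1
      have hBfix : B (lep p) = lep p := h1.2
      have hεA : ∃ ε > 0, ∀ s ∈ Set.Ioo (lep p) (lep p + ε), A s = s := by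
        by_contra hc
        push_neg at hc
        apply hnoA
        refine ⟨hIoo, hAfix, fun ε hε => ?_⟩
        obtain ⟨s', hs1', hs2'⟩ := hc ε hε
        exact ⟨s', hs1', hs2'⟩
      have hεB : ∃ ε > 0, ∀ s ∈ Set.Ioo (lep p) (lep p + ε), B s = s := by
        by_contra hc
        push_neg at hc
        apply hnoB
        refine ⟨hIoo, hBfix, fun ε hε => ?_⟩
        obtain ⟨s', hs1', hs2'⟩ := hc ε hε
        exact ⟨s', hs1', hs2'⟩
      obtain ⟨εA, hεA0, hfA⟩ := hεA
      obtain ⟨εB, hεB0, hfB⟩ := hεB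
      set s' := lep p + min (min εA εB) (rep p - lep p) / 2 with hs'def
      have hd0 : 0 < min (min εA εB) (rep p - lep p) := by
        apply lt_min (lt_min hεA0 hεB0)
        linarith [lt_trans h3 h7]
      have hs'1 : lep p < s' := by rw [hs'def]; linarith
      have hs'A : s' ∈ Set.Ioo (lep p) (lep p + εA) := by
        constructor
        · exact hs'1
        · have : min (min εA εB) (rep p - lep p) ≤ εA :=
            le_trans (min_le_left _ _) (min_le_left _ _)
          rw [hs'def]; linarith
      have hs'B : s' ∈ Set.Ioo (lep p) (lep p + εB) := by
        constructor
        · exact hs'1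
        · have : min (min εA εB) (rep p - lep p) ≤ εB :=
            le_trans (min_le_left _ _) (min_le_right _ _)
          rw [hs'def]; linarith
      have hs'F : s' ∈ Fx := ⟨hfA s' hs'A, hfB s' hs'B⟩
      have hs'r : s' < rep p := by
        have : min (min εA εB) (rep p - lep p) ≤ rep p - lep p := min_le_right _ _
        rw [hs'def]; linarith
      exact hnob p hpI hpF s' hs'F ⟨hs'1, hs'r⟩
  -- nontrivial elements have support in the base interval
  have hSne : ∀ w : H, w ∈ Γ → w ≠ 1 → ∃ p, p ∈ Set.Ioo x₀ (x₀ + 1) ∧ Φ w p ≠ p := by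
    intro w hw hw1
    have hmove : ∃ t, Φ w t ≠ t := by
      by_contra hc
      push_neg at hc
      exact hw1 (hΦinj w hw (funext fun t => hc t))
    obtain ⟨t, ht⟩ := hmove
    set M : ℤ := ⌊t - x₀⌋ with hM
    set t' := t - M with ht'
    have h1 : x₀ ≤ t' := by
      have := Int.floor_le (t - x₀); rw [ht']; linarith [this]
    have h2 : t' < x₀ + 1 := by
      have := Int.lt_floor_add_one (t - x₀); rw [ht']; push_cast; linarith [this]
    have h3 : Φ w t' ≠ t' := by
      intro hc
      apply ht
      have h5 := per_int (hpe w hw) M t'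
      rw [hc] at h5
      have ht'' : t' + (M : ℝ) = t := by rw [ht']; ring
      rw [ht''] at h5
      rw [h5]
    have h4 : t' ≠ x₀ := by
      intro hc; rw [hc] at h3; exact h3 (hx0 w hw)
    exact ⟨t', ⟨lt_of_le_of_ne h1 (Ne.symm h4), h2⟩, h3⟩
  -- the hard power lemma: powers keep moving a moved point
  have HPOW : ∀ g : H, g ∈ Γ → ∀ t : ℝ, Φ g t ≠ t → ∀ j : ℤ, j ≠ 0 → Φ (g ^ j) t ≠ t := by
    intro g hg t hgt j hj
    set Fg : Set ℝ := {r | Φ g r = r} with hFgdef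
    have hFgcl : IsClosed Fg := isClosed_eq (hco g hg) continuous_id
    have hlo : x₀ + (⌊t - x₀⌋ : ℝ) ∈ Fg := by
      have := per_int (hpe g hg) ⌊t - x₀⌋ x₀; rw [hx0 g hg] at this; exact this
    have hhi : x₀ + (⌊t - x₀⌋ : ℝ) + 1 ∈ Fg := by
      have h9 := per_int (hpe g hg) (⌊t - x₀⌋ + 1) x₀
      rw [hx0 g hg] at h9
      have h8 : x₀ + ((⌊t - x₀⌋ + 1 : ℤ) : ℝ) = x₀ + (⌊t - x₀⌋ : ℝ) + 1 := by push_cast; ring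
      show Φ g (x₀ + (⌊t - x₀⌋ : ℝ) + 1) = x₀ + (⌊t - x₀⌋ : ℝ) + 1
      rw [← h8, h9]
    have hbd1 : x₀ + (⌊t - x₀⌋ : ℝ) ≤ t := by linarith [Int.floor_le (t - x₀)]
    have hbd2 : t ≤ x₀ + (⌊t - x₀⌋ : ℝ) + 1 := by linarith [Int.lt_floor_add_one (t - x₀)]
    obtain ⟨hα1, _, hα3, hα4⟩ := gap_left hFgcl hlo hbd1 hgt
    obtain ⟨hβ1, _, hβ3, hβ4⟩ := gap_right hFgcl hhi hbd2 hgt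
    set αg := sSup (Fg ∩ Set.Iic t) with hαgdef
    set βg := sInf (Fg ∩ Set.Ici t) with hβgdef
    have hαfix : Φ g αg = αg := hα1
    have hβfix : Φ g βg = βg := hβ1
    have hnofixg : ∀ r, αg < r → r < βg → Φ g r ≠ r := by
      intro r hr1 hr2 hr
      rcases le_total r t with h | h
      · exact absurd (hα4 r hr h) (not_le.2 hr1)
      · exact absurd (hβ4 r hr h) (not_le.2 hr2)
    have hkey : ∀ r, αg < r → r < βg → ∀ r', αg < r' → r' < βg →
        r' < Φ g r' → Φ g r < r → False := by
      intro r hr1 hr2 r' hr1' hr2' hpos hneg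
      set D : ℝ → ℝ := fun u => Φ g u - u with hD
      have hDc : Continuous D := (hco g hg).sub continuous_id
      have h0 : (0 : ℝ) ∈ Set.uIcc (D r) (D r') := by
        rw [Set.mem_uIcc]
        left
        exact ⟨show Φ g r - r ≤ 0 by linarith, show (0:ℝ) ≤ Φ g r' - r' by linarith⟩
      obtain ⟨q, hq1, hq2⟩ := intermediate_value_uIcc hDc.continuousOn h0
      have hq3 : Φ g q = q := by
        have h5 : Φ g q - q = 0 := hq2
        linarith
      rw [Set.mem_uIcc] at hq1
      have hq4 : αg < q ∧ q < βg := by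
        rcases hq1 with ⟨ha', hb'⟩ | ⟨ha', hb'⟩ <;> exact ⟨by linarith, by linarith⟩
      exact hnofixg q hq4.1 hq4.2 hq3
    have hsign : ∀ r, αg < r → r < βg →
        ((t < Φ g t → r < Φ g r) ∧ (Φ g t < t → Φ g r < r)) := by
      intro r hr1 hr2
      constructor
      · intro hpos
        by_contra hc
        push_neg at hc
        exact hkey r hr1 hr2 t hα3 hβ3 hpos
          (lt_of_le_of_ne hc (hnofixg r hr1 hr2))
      · intro hneg
        by_contra hc
        push_neg at hc
        exact hkey t hα3 hβ3 r hr1 hr2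
          (lt_of_le_of_ne hc (fun h => (hnofixg r hr1 hr2) h.symm)) hneg
    intro hcontra
    have hmain : ∀ k : ℕ, Φ (g ^ (k + 1)) t ≠ t := by
      rcases lt_or_gt_of_ne hgt with hneg | hpos
      · have hstep : ∀ k : ℕ, Φ (g ^ (k + 1)) t < t ∧ αg < Φ (g ^ (k + 1)) t := by
          intro k
          induction k with
          | zero =>
            rw [pow_one]
            refine ⟨hneg, ?_⟩
            have h7 := (hmo g hg) hα3
            rwa [hαfix] at h7
          | succ k ih =>
            have heq : Φ (g ^ (k + 2)) t = Φ g (Φ (g ^ (k + 1)) t) := by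
              rw [show k + 2 = (k + 1) + 1 from rfl, pow_succ']
              exact hΦm' g hg (g ^ (k + 1)) (pow_mem hg (k + 1)) t
            have hrb : Φ (g ^ (k + 1)) t < βg := lt_trans ih.1 hβ3
            constructor
            · rw [heq]
              have h7 := (hsign _ ih.2 hrb).2 hneg
              linarith [ih.1]
            · rw [heq]
              have h7 := (hmo g hg) ih.2
              rwa [hαfix] at h7
        exact fun k => ne_of_lt (hstep k).1
      · have hstep : ∀ k : ℕ, t < Φ (g ^ (k + 1)) t ∧ Φ (g ^ (k + 1)) t < βg := by
          intro k
          induction k with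
          | zero =>
            rw [pow_one]
            refine ⟨hpos, ?_⟩
            have h7 := (hmo g hg) hβ3
            rwa [hβfix] at h7
          | succ k ih =>
            have heq : Φ (g ^ (k + 2)) t = Φ g (Φ (g ^ (k + 1)) t) := by
              rw [show k + 2 = (k + 1) + 1 from rfl, pow_succ']
              exact hΦm' g hg (g ^ (k + 1)) (pow_mem hg (k + 1)) t
            have hra : αg < Φ (g ^ (k + 1)) t := lt_trans hα3 ih.1
            constructor
            · rw [heq]
              have h7 := (hsign _ hra ih.2).1 hpos
              linarith [ih.1]
            · rw [heq]
              have h7 := (hmo g hg) ih.2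
              rwa [hβfix] at h7
        exact fun k => ne_of_gt (hstep k).1
    rcases lt_or_ge 0 j with hjpos | hjle
    · obtain ⟨k, rfl⟩ := Int.eq_ofNat_of_zero_le (le_of_lt hjpos)
      obtain ⟨k', rfl⟩ : ∃ k', k = k' + 1 := ⟨k - 1, by omega⟩
      rw [zpow_natCast] at hcontra
      exact hmain k' hcontra
    · have hjneg : j < 0 := lt_of_le_of_ne hjle hj
      obtain ⟨k, hk⟩ : ∃ k : ℕ, -j = (k : ℤ) := ⟨(-j).toNat, by omega⟩
      obtain ⟨k', rfl⟩ : ∃ k', k = k' + 1 := ⟨k - 1, by omega⟩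
      have h9 : Φ (g ^ (-j)) t = t := by
        have h10 : Φ (g ^ (-j)) (Φ (g ^ j) t) = t := by
          have h11 : Φ (g ^ (-j) * g ^ j) t = Φ (g ^ (-j)) (Φ (g ^ j) t) :=
            hΦm' _ (zpow_mem hg _) _ (zpow_mem hg _) t
          rw [← h11, ← zpow_add, neg_add_cancel, zpow_zero, hΦ1]
          rfl
        rwa [hcontra] at h10
      rw [hk, zpow_natCast] at h9
      exact hmain k' h9
  -- The main induction on the number of components met by the support
  have hIND : ∀ N : ℕ, ∀ w : H, w ∈ Γ →
      (∃ p q : H, p ∈ Γ ∧ q ∈ Γ ∧ w = p * q * p⁻¹ * q⁻¹) → w ≠ 1 →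
      (SS w).ncard = N → False := by
    intro N
    induction N using Nat.strong_induction_on with
    | _ N ih =>
    rintro w hwΓ ⟨pp, qq, hppΓ, hqqΓ, hwcomm⟩ hwne hcard
    obtain ⟨p₀, hp₀I, hwp₀⟩ := hSne w hwΓ hwne
    have hp₀F : p₀ ∉ Fx := fun hF => hwp₀ (hFxΓ w hwΓ p₀ hF)
    obtain ⟨hg1, hg2, hg3, hg4, hg5, hg6, hg7, hg8⟩ := hgap p₀ hp₀I hp₀F
    obtain ⟨δ1, hδ1, hger1⟩ := hgermR pp qq hppΓ hqqΓ (lep p₀) hg1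
    obtain ⟨δ2, hδ2, hger2⟩ := hgermL pp qq hppΓ hqqΓ (rep p₀) hg5
    rw [← hwcomm] at hger1 hger2
    set m := lep p₀ + min δ1 (p₀ - lep p₀) with hmdef
    set s := rep p₀ - min δ2 (rep p₀ - p₀) with hsdef
    have hαm : lep p₀ < m := by
      rw [hmdef]
      have : 0 < min δ1 (p₀ - lep p₀) := lt_min hδ1 (by linarith)
      linarith
    have hmp : m ≤ p₀ := by
      rw [hmdef]
      have := min_le_right δ1 (p₀ - lep p₀)
      linarith
    have hps : p₀ ≤ s := by
      rw [hsdef]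
      have := min_le_right δ2 (rep p₀ - p₀)
      linarith
    have hsβ : s < rep p₀ := by
      rw [hsdef]
      have : 0 < min δ2 (rep p₀ - p₀) := lt_min hδ2 (by linarith)
      linarith
    have hsupp : ∀ t, lep p₀ < t → t < rep p₀ → Φ w t ≠ t → (m ≤ t ∧ t ≤ s) := by
      intro t ht1 ht2 htw
      constructor
      · by_contra hc
        push_neg at hc
        apply htw
        apply hger1
        constructor
        · linarith
        · have := min_le_left δ1 (p₀ - lep p₀)
          rw [hmdef] at hc
          linarith
      · by_contra hc
        push_neg at hc
        apply htw
        apply hger2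
        constructor
        · have := min_le_left δ2 (rep p₀ - p₀)
          rw [hsdef] at hc
          linarith
        · linarith
    obtain ⟨u, huΓ, hum⟩ := horbit (lep p₀) (rep p₀) hg1 hg5 (hnob p₀ hp₀I hp₀F)
      m s hαm (le_trans hmp hps) hsβ
    set v : H := u * w * u⁻¹ with hvdef
    have hvΓ : v ∈ Γ := mul_mem (mul_mem huΓ hwΓ) (inv_mem huΓ)
    have hΦv : ∀ t, Φ v t = Φ u (Φ w (Φ u⁻¹ t)) := by
      intro t
      rw [hvdef, hΦm' _ (mul_mem huΓ hwΓ) _ (inv_mem huΓ), hΦm' _ huΓ _ hwΓ]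
    have hI₀inv : ∀ h : H, h ∈ Γ → ∀ t, lep p₀ < t → t < rep p₀ →
        lep p₀ < Φ h t ∧ Φ h t < rep p₀ := by
      intro h hh t ht1 ht2
      constructor
      · have h7 := (hmo h hh) ht1
        rwa [hFxΓ h hh _ hg1] at h7
      · have h7 := (hmo h hh) ht2
        rwa [hFxΓ h hh _ hg5] at h7
    have hvsupp : ∀ t, lep p₀ < t → t < rep p₀ → Φ v t ≠ t → s < t := by
      intro t ht1 ht2 htv
      have hq : Φ w (Φ u⁻¹ t) ≠ Φ u⁻¹ t := by
        intro hc
        apply htv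
        rw [hΦv t, hc]
        exact (hΦinv u huΓ).2 t
      have hqI := hI₀inv u⁻¹ (inv_mem huΓ) t ht1 ht2
      have hqs := hsupp _ hqI.1 hqI.2 hq
      have h7 : Φ u m ≤ Φ u (Φ u⁻¹ t) := (hmo u huΓ).monotone hqs.1
      rw [(hΦinv u huΓ).2 t] at h7
      linarith
    have hwcommI : ∀ t, lep p₀ < t → t < rep p₀ → Φ (w * v * w⁻¹ * v⁻¹) t = t := by
      intro t ht1 ht2
      have hexp : Φ (w * v * w⁻¹ * v⁻¹) t = Φ w (Φ v (Φ w⁻¹ (Φ v⁻¹ t))) := by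
        rw [hΦm' _ (mul_mem (mul_mem hwΓ hvΓ) (inv_mem hwΓ)) _ (inv_mem hvΓ),
            hΦm' _ (mul_mem hwΓ hvΓ) _ (inv_mem hwΓ), hΦm' _ hwΓ _ hvΓ]
      rw [hexp]
      by_cases hwt : Φ w t = t
      · by_cases hvt : Φ v t = t
        · rw [hinvfix v hvΓ t hvt, hinvfix w hwΓ t hwt, hvt, hwt]
        · -- t in support of v only
          have hst : s < t := hvsupp t ht1 ht2 hvt
          set r1 := Φ v⁻¹ t with hr1def
          have hr1I := hI₀inv v⁻¹ (inv_mem hvΓ) t ht1 ht2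
          have hvr1 : Φ v r1 = t := (hΦinv v hvΓ).2 t
          have hr1w : Φ w r1 = r1 := by
            by_contra hc
            have h7 := hsupp r1 hr1I.1 hr1I.2 hc
            have h8 : Φ v r1 ≠ r1 := by
              intro hc2
              have hrt : r1 = t := by rw [← hc2, hvr1]
              apply hvt
              rw [← hrt]
              exact hc2
            have := hvsupp r1 hr1I.1 hr1I.2 h8
            linarith [h7.2]
          rw [hinvfix w hwΓ r1 hr1w, hvr1, hwt]
      · -- t in support of w; not in support of v
        have hts := hsupp t ht1 ht2 hwt
        have hvt : Φ v t = t := by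
          by_contra hc
          have := hvsupp t ht1 ht2 hc
          linarith [hts.2]
        rw [hinvfix v hvΓ t hvt]
        set r2 := Φ w⁻¹ t with hr2def
        have hr2I := hI₀inv w⁻¹ (inv_mem hwΓ) t ht1 ht2
        have hwr2 : Φ w r2 = t := (hΦinv w hwΓ).2 t
        have hr2w : Φ w r2 ≠ r2 := by
          intro hc
          have hrt : r2 = t := by rw [← hc, hwr2]
          apply hwt
          rw [← hrt]
          exact hc
        have hr2s := hsupp r2 hr2I.1 hr2I.2 hr2w
        have hr2v : Φ v r2 = r2 := by
          by_contra hc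
          have := hvsupp r2 hr2I.1 hr2I.2 hc
          linarith [hr2s.2]
        rw [hr2v, hwr2]
    by_cases hw' : w * v * w⁻¹ * v⁻¹ = 1
    · -- w and v commute in the free group H
      have hwv : w * v = v * w := by
        have h7 : w * v * w⁻¹ = v := by
          have := mul_eq_one_iff_eq_inv.1 hw'
          rwa [inv_inv] at this
        calc w * v = (w * v * w⁻¹) * w := by group
        _ = v * w := by rw [h7]
      obtain ⟨z, hzcl, i, j, hzi, hzj⟩ := freeGroup_commute_powers hwv
      have hzΓ : z ∈ Γ := by
        have hsub2 : Subgroup.closure ({w, v} : Set H) ≤ Γ := by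
          apply (Subgroup.closure_le Γ).2
          rintro y (rfl | rfl)
          · exact hwΓ
          · exact hvΓ
        exact hsub2 hzcl
      have hi0 : i ≠ 0 := by
        intro h0
        exact hwne (by rw [hzi, h0, zpow_zero])
      have hvne : v ≠ 1 := by
        intro h1
        apply hwne
        rw [hvdef] at h1
        have := congrArg (fun y => u⁻¹ * y * u) h1
        simpa [mul_assoc] using this
      have hj0 : j ≠ 0 := by
        intro h0
        exact hvne (by rw [hzj, h0, zpow_zero])
      have hzp₀ : Φ z p₀ ≠ p₀ := by
        intro hfixz
        exact hwp₀ (by rw [hzi]; exact heasy z hzΓ p₀ hfixz i)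
      have hvp₀ : Φ v p₀ ≠ p₀ := by
        rw [hzj]
        exact HPOW z hzΓ p₀ hzp₀ j hj0
      have h7 := hvsupp p₀ hg3 hg7 hvp₀
      linarith [hps]
    · -- recurse on w' with strictly smaller support measure
      set w' : H := w * v * w⁻¹ * v⁻¹ with hw'def
      have hw'Γ : w' ∈ Γ := mul_mem (mul_mem (mul_mem hwΓ hvΓ) (inv_mem hwΓ)) (inv_mem hvΓ)
      have hss : SS w' ⊆ SS w \ {lep p₀} := by
        rintro γ ⟨p, ⟨hpI, hpw'⟩, rfl⟩
        have hpF : p ∉ Fx := fun hF => hpw' (hFxΓ w' hw'Γ p hF)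
        constructor
        · by_cases hwp : Φ w p = p
          · -- p is moved by v, so some point in the same component is moved by w
            have hvp : Φ v p ≠ p := by
              intro hvp
              apply hpw'
              have hexp : Φ w' p = Φ w (Φ v (Φ w⁻¹ (Φ v⁻¹ p))) := by
                rw [hw'def, hΦm' _ (mul_mem (mul_mem hwΓ hvΓ) (inv_mem hwΓ)) _ (inv_mem hvΓ),
                    hΦm' _ (mul_mem hwΓ hvΓ) _ (inv_mem hwΓ), hΦm' _ hwΓ _ hvΓ]
              rw [hexp, hinvfix v hvΓ p hvp, hinvfix w hwΓ p hwp, hvp, hwp]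
            set q := Φ u⁻¹ p with hqdef
            have hq : Φ w q ≠ q := by
              intro hc
              apply hvp
              rw [hΦv p, ← hqdef, hc, hqdef]
              exact (hΦinv u huΓ).2 p
            obtain ⟨hk1, hk2, hk3, hk4, hk5, hk6, hk7, hk8⟩ := hgap p hpI hpF
            have hqcomp : lep p < q ∧ q < rep p := by
              constructor
              · have h7 := (hmo u⁻¹ (inv_mem huΓ)) hk3
                rwa [hFxΓ u⁻¹ (inv_mem huΓ) _ hk1] at h7
              · have h7 := (hmo u⁻¹ (inv_mem huΓ)) hk7
                rwa [hFxΓ u⁻¹ (inv_mem huΓ) _ hk5] at h7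
            have hqI : q ∈ Set.Ioo x₀ (x₀ + 1) :=
              ⟨lt_of_le_of_lt hk2 hqcomp.1, lt_of_lt_of_le hqcomp.2 hk6⟩
            have hqF : q ∉ Fx := fun hF => hq (hFxΓ w hwΓ q hF)
            have hlq : lep q = lep p := by
              have h7 := (hlinv u huΓ q hqI hqF).1
              have h8 : Φ u q = p := by rw [hqdef]; exact (hΦinv u huΓ).2 p
              rw [h8] at h7
              exact h7.symm
            exact ⟨q, ⟨hqI, hq⟩, hlq⟩
          · exact ⟨p, ⟨hpI, hwp⟩, rfl⟩
        · -- lep p ≠ lep p₀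
          intro hmem
          rw [Set.mem_singleton_iff] at hmem
          have hpin : lep p₀ < p ∧ p < rep p₀ := by
            constructor
            · rw [← hmem]
              exact (hgap p hpI hpF).2.2.1
            · by_contra hc
              push_neg at hc
              have h7 := (hgap p hpI hpF).2.2.2.1 (rep p₀) hg5 hc
              rw [hmem] at h7
              linarith
          exact hpw' (hwcommI p hpin.1 hpin.2)
      have hfinw : (SS w).Finite := hE.subset (hSsub w hwΓ)
      have hα₀S : lep p₀ ∈ SS w := ⟨p₀, ⟨hp₀I, hwp₀⟩, rfl⟩
      have h1 : (SS w').ncard ≤ (SS w \ {lep p₀}).ncard :=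
        Set.ncard_le_ncard hss hfinw.diff
      have h2 : (SS w \ {lep p₀}).ncard < (SS w).ncard :=
        Set.ncard_diff_singleton_lt_of_mem hα₀S hfinw
      exact ih ((SS w').ncard) (by omega) w' hw'Γ ⟨w, v, hwΓ, hvΓ, rfl⟩ hw' rfl
  -- Conclusion: the commutator of a and b violates the induction
  have hc1 : a * b * a⁻¹ * b⁻¹ ≠ 1 := by
    intro h1
    apply hab
    have h7 : a * b * a⁻¹ = b := by
      have := mul_eq_one_iff_eq_inv.1 h1
      rwa [inv_inv] at this
    calc a * b = (a * b * a⁻¹) * a := by group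
    _ = b * a := by rw [h7]
  exact hIND ((SS (a * b * a⁻¹ * b⁻¹)).ncard) (a * b * a⁻¹ * b⁻¹)
    (mul_mem (mul_mem (mul_mem haΓ hbΓ) (inv_mem haΓ)) (inv_mem hbΓ))
    ⟨a, b, haΓ, hbΓ, rfl⟩ hc1 rfl

/-- If `H` is a non-abelian free subgroup of `T_n` and `κ ∈ ℤ[1/n]/ℤ`, then the stabilizer
of `κ` in `H` is cyclic: it consists exactly of the integer powers of a single element. -/
theorem stabilizer_in_free_subgroup_cyclic (n : ℕ) (hn : 2 ≤ n)
    (H : Subgroup (Circle1 ≃ₜ Circle1)) (hHT : ∀ f ∈ H, TnMem n f)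
    (hfree : IsFreeGroup H) (hnonab : ∃ x y : H, x * y ≠ y * x)
    (κ : Circle1) (hκ : ∃ x : ℝ, IsNAdicRational n x ∧ κ = (x : Circle1)) :
    ∃ g : H, ∀ h : H, (h : Circle1 ≃ₜ Circle1) κ = κ ↔ ∃ m : ℤ, h = g ^ m := by
  classical
  haveI := hfree
  obtain ⟨x₀, -, rfl⟩ := hκ
  -- the stabilizer subgroup of x₀ inside H
  set SH : Subgroup H :=
    { carrier := {h : H | (h : Circle1 ≃ₜ Circle1) ((x₀ : ℝ) : Circle1) = ((x₀ : ℝ) : Circle1)}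
      one_mem' := rfl
      mul_mem' := by
        intro g h hg hh
        show ((g * h : H) : Circle1 ≃ₜ Circle1) _ = _
        have h1 : ((g * h : H) : Circle1 ≃ₜ Circle1) = (g : Circle1 ≃ₜ Circle1) * h := rfl
        rw [h1, circleMul_apply, hh, hg]
      inv_mem' := by
        intro g hg
        show ((g⁻¹ : H) : Circle1 ≃ₜ Circle1) _ = _
        have h1 : ((g⁻¹ : H) : Circle1 ≃ₜ Circle1) = ((g : Circle1 ≃ₜ Circle1)).symm := rfl
        rw [h1]
        conv_lhs => rw [← hg]
        exact Homeomorph.symm_apply_apply _ _ } with hSHdef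
  have hcommSH : ∀ g h : SH, g * h = h * g := by
    intro g h
    have := stab_comm n hn H hHT hfree x₀ (g : H) (h : H) g.2 h.2
    exact Subtype.ext this
  haveI : IsFreeGroup SH := subgroupIsFreeOfIsFree SH
  obtain ⟨g₀, hg₀⟩ := freeGroup_cyclic_of_comm hcommSH
  refine ⟨(g₀ : H), fun h => ⟨?_, ?_⟩⟩
  · intro hh
    obtain ⟨m, hm⟩ := hg₀ ⟨h, hh⟩
    refine ⟨m, ?_⟩
    have := congrArg (Subgroup.subtype SH) hm
    simpa using this
  · rintro ⟨m, rfl⟩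
    show (((g₀ : H) ^ m : H) : Circle1 ≃ₜ Circle1) _ = _
    have h1 : (((g₀ : H) ^ m : H) : Circle1 ≃ₜ Circle1) = ((g₀ : H) : Circle1 ≃ₜ Circle1) ^ m := by
      push_cast
      rfl
    rw [h1]
    exact fix_zpow g₀.2 m
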